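/- Let Q be an acyclic quiver with full commutativity relations presenting the incidence algebra A of a finite poset, and let I, J be intervals of Q. Then there exists an epimorphism of A-modules V_J → V_I if and only if I_0 is a down-set in J_0. -/

import Mathlib

set_option linter.unusedSectionVars false

open scoped Classical

/-- A persistence module over the poset `P`: a functor `P → Vect_k`.
(This models pointwise finite modules over the incidence algebra `A = kQ/ρ` of the poset.) -/
structure PersMod (k P : Type) [Field k] [PartialOrder P] where
  V : P → Type
  [acg : ∀ a, AddCommGroup (V a)]
  [mod : ∀ a, Module k (V a)]
  map : ∀ {a b : P}, a ≤ b → (V a →ₗ[k] V b)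
  map_id : ∀ a : P, map (le_refl a) = LinearMap.id
  map_comp : ∀ {a b c : P} (h₁ : a ≤ b) (h₂ : b ≤ c),
    (map h₂).comp (map h₁) = map (h₁.trans h₂)

attribute [instance] PersMod.acg PersMod.mod

variable {k P : Type} [Field k] [PartialOrder P]

/-- Morphisms of persistence modules, as a `k`-submodule of the product of Hom-spaces. -/
def PersHomSub (M N : PersMod k P) :
    Submodule k (∀ a : P, M.V a →ₗ[k] N.V a) where
  carrier := {f | ∀ ⦃a b : P⦄ (h : a ≤ b), (N.map h).comp (f a) = (f b).comp (M.map h)}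
  add_mem' := by
    intro f g hf hg a b h
    simp only [Pi.add_apply, LinearMap.comp_add, LinearMap.add_comp, hf h, hg h]
  zero_mem' := by intro a b h; simp
  smul_mem' := by
    intro c f hf a b h
    simp only [Pi.smul_apply, LinearMap.comp_smul, LinearMap.smul_comp, hf h]

/-- The space of morphisms `M → N` of persistence modules. -/
def PersHom (M N : PersMod k P) : Type := ↥(PersHomSub M N)

noncomputable instance (M N : PersMod k P) : AddCommGroup (PersHom M N) :=
  inferInstanceAs (AddCommGroup ↥(PersHomSub M N))
noncomputable instance (M N : PersMod k P) : Module k (PersHom M N) :=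
  inferInstanceAs (Module k ↥(PersHomSub M N))

/-- Composition of morphisms of persistence modules. -/
def PersHom.comp {M N O : PersMod k P} (g : PersHom N O) (f : PersHom M N) :
    PersHom M O :=
  ⟨fun a => (g.1 a).comp (f.1 a), by
    intro a b h
    rw [← LinearMap.comp_assoc, g.2 h, LinearMap.comp_assoc, f.2 h, LinearMap.comp_assoc]⟩

def IsMonoP {M N : PersMod k P} (f : PersHom M N) : Prop :=
  ∀ a : P, Function.Injective (f.1 a)

def IsEpiP {M N : PersMod k P} (f : PersHom M N) : Prop :=
  ∀ a : P, Function.Surjective (f.1 a)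

def IsIsoP {M N : PersMod k P} (f : PersHom M N) : Prop :=
  ∀ a : P, Function.Bijective (f.1 a)

/-- Convexity of a subset of the poset. -/
def IsConvexSet (I : Set P) : Prop :=
  ∀ ⦃a b c : P⦄, a ∈ I → c ∈ I → a ≤ b → b ≤ c → b ∈ I

/-- Zigzag-connectivity of a subset of the poset. -/
def IsConnectedSet (I : Set P) : Prop :=
  I.Nonempty ∧ ∀ a ∈ I, ∀ b ∈ I,
    Relation.ReflTransGen (fun x y => x ∈ I ∧ y ∈ I ∧ (x ≤ y ∨ y ≤ x)) a b

/-- An interval of the poset: a connected convex subset. -/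
def IsIntervalSet (I : Set P) : Prop := IsConvexSet I ∧ IsConnectedSet I

/-- The underlying linear map of the interval module. -/
noncomputable def intervalMap (I : Set P) (a b : P) :
    ↥(if a ∈ I then (⊤ : Submodule k k) else ⊥) →ₗ[k]
      ↥(if b ∈ I then (⊤ : Submodule k k) else ⊥) where
  toFun v := ⟨if a ∈ I ∧ b ∈ I then (v : k) else 0, by
    by_cases hb : b ∈ I
    · simp [hb]
    · have hab : ¬(a ∈ I ∧ b ∈ I) := fun h' => hb h'.2
      rw [if_neg hb, if_neg hab]
      exact Submodule.zero_mem _⟩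
  map_add' v w := by
    apply Subtype.ext
    by_cases h' : a ∈ I ∧ b ∈ I <;> simp [h']
  map_smul' c v := by
    apply Subtype.ext
    by_cases h' : a ∈ I ∧ b ∈ I <;> simp [h']

@[simp] lemma intervalMap_coe (I : Set P) (a b : P)
    (v : ↥(if a ∈ I then (⊤ : Submodule k k) else ⊥)) :
    ((intervalMap I a b v : ↥(if b ∈ I then (⊤ : Submodule k k) else ⊥)) : k)
      = if a ∈ I ∧ b ∈ I then (v : k) else 0 := rfl

lemma intervalMem_zero {I : Set P} {a : P} (ha : a ∉ I)
    (v : ↥(if a ∈ I then (⊤ : Submodule k k) else ⊥)) : (v : k) = 0 := by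
  obtain ⟨x, hx⟩ := v
  rw [if_neg ha] at hx
  exact (Submodule.mem_bot k).mp hx

/-- The interval module `V_I` associated to a convex subset `I`. -/
noncomputable def intervalMod (I : Set P) (hI : IsConvexSet I) : PersMod k P where
  V a := ↥(if a ∈ I then (⊤ : Submodule k k) else ⊥)
  map {a b} _ := intervalMap I a b
  map_id a := by
    ext v
    rw [intervalMap_coe]
    by_cases ha : a ∈ I
    · simp [ha]
    · rw [if_neg (fun h => ha h.1), LinearMap.id_apply, intervalMem_zero ha v]
  map_comp {a b c} h₁ h₂ := by
    ext v
    rw [LinearMap.comp_apply, intervalMap_coe, intervalMap_coe, intervalMap_coe]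
    by_cases ha : a ∈ I <;> by_cases hb : b ∈ I <;> by_cases hc : c ∈ I <;>
      first
        | (exact absurd (hI ha hc h₁ h₂) hb)
        | simp [ha, hb, hc]

/-- Finite direct sums of persistence modules. -/
noncomputable def dSum {ι : Type} (M : ι → PersMod k P) : PersMod k P where
  V a := ∀ i, (M i).V a
  map {a b} h := LinearMap.pi fun i => ((M i).map h).comp (LinearMap.proj i)
  map_id a := by
    refine LinearMap.ext fun v => ?_
    funext i
    simp [LinearMap.pi_apply, (M i).map_id]
  map_comp {a b c} h₁ h₂ := by
    refine LinearMap.ext fun v => ?_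
    funext i
    simpa [LinearMap.pi_apply] using LinearMap.congr_fun ((M i).map_comp h₁ h₂) (v i)

/-- A persistence module is interval decomposable if it is isomorphic to a finite
direct sum of interval modules. -/
def IntervalDecomposable (W : PersMod k P) : Prop :=
  ∃ (n : ℕ) (J : Fin n → Set P) (hJ : ∀ i, IsIntervalSet (J i))
    (e : PersHom W (dSum fun i => intervalMod (J i) (hJ i).1)), IsIsoP e

/-- The combined morphism `⊕ᵢ Mᵢ → N` of a finite family of morphisms `Mᵢ → N`. -/
noncomputable def combineHom {ι : Type} [Fintype ι] {Mf : ι → PersMod k P}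
    {N : PersMod k P} (f : ∀ i, PersHom (Mf i) N) : PersHom (dSum Mf) N :=
  ⟨fun a => ∑ i, ((f i).1 a).comp (LinearMap.proj i), by
    intro a b h
    refine LinearMap.ext fun v => ?_
    simp only [LinearMap.comp_apply, LinearMap.sum_apply, LinearMap.proj_apply, map_sum]
    refine Finset.sum_congr rfl fun i _ => ?_
    have := LinearMap.congr_fun ((f i).2 h) (v i)
    exact this⟩

/-- The pointwise restriction map `V_J a → V_I a`. -/
noncomputable def restrictHom (I J : Set P) (a : P) :
    ↥(if a ∈ J then (⊤ : Submodule k k) else ⊥) →ₗ[k]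
      ↥(if a ∈ I then (⊤ : Submodule k k) else ⊥) where
  toFun v := ⟨if a ∈ I then (v : k) else 0, by
    by_cases h : a ∈ I
    · simp [h]
    · rw [if_neg h, if_neg h]; exact Submodule.zero_mem _⟩
  map_add' v w := by apply Subtype.ext; by_cases h : a ∈ I <;> simp [h]
  map_smul' c v := by apply Subtype.ext; by_cases h : a ∈ I <;> simp [h]

@[simp] lemma restrictHom_coe (I J : Set P) (a : P)
    (v : ↥(if a ∈ J then (⊤ : Submodule k k) else ⊥)) :
    ((restrictHom I J a v : ↥(if a ∈ I then (⊤ : Submodule k k) else ⊥)) : k)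
      = if a ∈ I then (v : k) else 0 := rfl

/-- For intervals `I, J` of the poset, there exists an epimorphism of
modules `V_J → V_I` iff `I` is a down-set in `J`. -/
theorem epi_between_interval_modules_iff_downset
    {k P : Type} [Field k] [PartialOrder P] [Fintype P]
    (I J : Set P) (hI : IsIntervalSet I) (hJ : IsIntervalSet J) :
    (∃ f : PersHom (intervalMod J hJ.1) (intervalMod I hI.1 : PersMod k P), IsEpiP f) ↔
      (I ⊆ J ∧ ∀ ⦃a b : P⦄, a ∈ J → b ∈ J → a ≤ b → b ∈ I → a ∈ I) := by
  constructor
  · rintro ⟨f, hf⟩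
    have hIJ : I ⊆ J := by
      intro a ha
      by_contra haJ
      obtain ⟨u, hu⟩ := hf a ⟨(1 : k), by simp [ha]⟩
      have hu0 : u = 0 := Subtype.ext ((intervalMem_zero haJ u).trans rfl)
      rw [hu0, map_zero] at hu
      have h1 := congrArg Subtype.val hu
      have h1' : (1 : k) = 0 := h1.symm
      exact one_ne_zero h1'
    refine ⟨hIJ, ?_⟩
    intro a b haJ hbJ hab hbI
    by_contra haI
    set w : ↥(if a ∈ J then (⊤ : Submodule k k) else ⊥) := ⟨1, by simp [haJ]⟩ with hwdef
    have h2 := congrArg Subtype.val (LinearMap.congr_fun (f.2 hab) w)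
    erw [LinearMap.comp_apply, LinearMap.comp_apply] at h2
    set w' := (intervalMod J hJ.1 : PersMod k P).map hab w with hw'
    have hw1 : Subtype.val (p := fun x : k => x ∈ if b ∈ J then (⊤ : Submodule k k) else ⊥) w' = 1 := by
      rw [hw']
      show ((intervalMap J a b w : _) : k) = 1
      rw [intervalMap_coe]
      simp [hwdef, haJ, hbJ]
    have hz : Subtype.val (f.1 b w') = 0 := by
      rw [← h2]
      show (if a ∈ I ∧ b ∈ I then Subtype.val (f.1 a w) else 0) = 0
      rw [if_neg (fun hc => haI hc.1)]
    obtain ⟨u, hu⟩ := hf b ⟨(1 : k), by simp [hbI]⟩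
    have h3 := congrArg Subtype.val hu
    have h4 : u = Subtype.val u • w' := by
      apply Subtype.ext
      erw [SetLike.val_smul, hw1, smul_eq_mul, mul_one]
    rw [h4, map_smul] at h3
    erw [SetLike.val_smul, hz, smul_zero] at h3
    simp at h3
  · rintro ⟨hIJ, hdown⟩
    refine ⟨⟨restrictHom I J, ?_⟩, ?_⟩
    · intro a b hab
      refine LinearMap.ext fun v => Subtype.ext ?_
      show (if a ∈ I ∧ b ∈ I then ((restrictHom I J a v : _) : k) else 0)
        = if b ∈ I then ((intervalMap J a b v : _) : k) else 0
      erw [restrictHom_coe, intervalMap_coe]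
      by_cases haI : a ∈ I <;> by_cases hbI : b ∈ I
      · simp [haI, hbI, hIJ haI, hIJ hbI]
      · simp [haI, hbI]
      · by_cases haJ : a ∈ J
        · exact absurd (hdown haJ (hIJ hbI) hab hbI) haI
        · simp [haI, hbI, haJ, intervalMem_zero haJ v]
      · simp [haI, hbI]
    · intro a
      by_cases haI : a ∈ I
      · intro w
        refine ⟨⟨Subtype.val w, by simp [hIJ haI]⟩, Subtype.ext ?_⟩
        show (if a ∈ I then Subtype.val w else 0) = Subtype.val w
        rw [if_pos haI]
      · intro w
        refine ⟨0, ?_⟩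
        rw [map_zero]
        exact Subtype.ext (Eq.trans rfl (intervalMem_zero haI w).symm)
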